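/- arXiv:1308.5153 — 2 statements merged into one kernel-verified Lean document; each statement's English description precedes it below -/
import Mathlib

section
/- Let f ∈ K[[x_1,...,x_n]] with ord(f) = s ≥ 2, and suppose ⟨f, m^k·j(f)⟩ = ⟨g, m^k·j(g)⟩ for some g ∈ K[[x]] and some k ≥ 2 with m^{⌊(k+2s)/2⌋} ⊆ m·⟨f⟩ + m^2·j(f). Then f is contact equivalent to g, assuming the finite determinacy theorem: if m^{l+2} ⊆ m⟨f⟩ + m^2 j(f) then f is contact (2l − ord(f) + 2)-determined. -/
noncomputable section

/-- The formal power series ring `K[[x_1,...,x_n]]`. -/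
abbrev PS (K : Type*) [Field K] (n : ℕ) := MvPowerSeries (Fin n) K

/-- The maximal ideal `m` of `K[[x]]` (power series with zero constant term). -/
def mx (K : Type*) [Field K] (n : ℕ) : Ideal (PS K n) :=
  RingHom.ker (MvPowerSeries.constantCoeff : PS K n →+* K)

/-- The `i`-th formal partial derivative of a power series. -/
def pd {K : Type*} [Field K] {n : ℕ} (i : Fin n) (f : PS K n) : PS K n :=
  fun e => (e i + 1 : ℕ) • MvPowerSeries.coeff (e + Finsupp.single i 1) f

/-- The Jacobian ideal `j(f) = ⟨∂f/∂x_1, ..., ∂f/∂x_n⟩`. -/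
def jId {K : Type*} [Field K] {n : ℕ} (f : PS K n) : Ideal (PS K n) :=
  Ideal.span (Set.range fun i => pd i f)

/-- The Tjurina ideal `tj(f) = ⟨f⟩ + j(f)`. -/
def tjId {K : Type*} [Field K] {n : ℕ} (f : PS K n) : Ideal (PS K n) :=
  Ideal.span {f} ⊔ jId f

/-- The ideal defining the `k`-th Tjurina algebra: `⟨f, m^k j(f)⟩`. -/
def TkId {K : Type*} [Field K] {n : ℕ} (k : ℕ) (f : PS K n) : Ideal (PS K n) :=
  Ideal.span {f} ⊔ (mx K n) ^ k * jId f

/-- The ideal defining the `k`-th Milnor algebra: `m^k j(f)`. -/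
def MkId {K : Type*} [Field K] {n : ℕ} (k : ℕ) (f : PS K n) : Ideal (PS K n) :=
  (mx K n) ^ k * jId f

/-- Contact equivalence: `g = u · φ(f)`. -/
def ContactEquiv {K : Type*} [Field K] {n : ℕ} (f g : PS K n) : Prop :=
  ∃ (φ : PS K n ≃ₐ[K] PS K n) (u : (PS K n)ˣ), g = (u : PS K n) * φ f

/-- Right equivalence: `g = φ(f)`. -/
def RightEquiv {K : Type*} [Field K] {n : ℕ} (f g : PS K n) : Prop :=
  ∃ φ : PS K n ≃ₐ[K] PS K n, g = φ f

/-- `f` is contact `N`-determined. -/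
def ContactDetermined {K : Type*} [Field K] {n : ℕ} (N : ℕ) (f : PS K n) : Prop :=
  ∀ g : PS K n, g - f ∈ (mx K n) ^ (N + 1) → ContactEquiv f g

/-- `f` is right `N`-determined. -/
def RightDetermined {K : Type*} [Field K] {n : ℕ} (N : ℕ) (f : PS K n) : Prop :=
  ∀ g : PS K n, g - f ∈ (mx K n) ^ (N + 1) → RightEquiv f g

section Aux
variable {K : Type*} [Field K] {n : ℕ}

lemma degAdd (a b : Fin n →₀ ℕ) : (a + b).degree = a.degree + b.degree := by
  simp [Finsupp.degree_eq_weight_one, map_add]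

lemma degSingle (i : Fin n) : (Finsupp.single i 1).degree = 1 := by
  simp [Finsupp.degree_eq_weight_one, Finsupp.weight_apply, Finsupp.sum_single_index]

lemma coeff_eq_zero_of_mem_mx_pow {t : ℕ} {h : PS K n} (hh : h ∈ (mx K n) ^ t)
    {d : Fin n →₀ ℕ} (hd : d.degree < t) : MvPowerSeries.coeff d h = 0 := by
  induction t generalizing h d with
  | zero => omega
  | succ t ih =>
    rw [pow_succ] at hh
    have key : ∀ d : Fin n →₀ ℕ, d.degree < t + 1 → MvPowerSeries.coeff d h = 0 := by
      refine Submodule.mul_induction_on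
        (C := fun x => ∀ d : Fin n →₀ ℕ, d.degree < t + 1 → MvPowerSeries.coeff d x = 0)
        hh ?_ ?_
      · intro a ha b hb d hd
        rw [MvPowerSeries.coeff_mul]
        apply Finset.sum_eq_zero
        intro p hp
        replace hp : p.1 + p.2 = d := Finset.HasAntidiagonal.mem_antidiagonal.mp hp
        by_cases h1 : p.1.degree < t
        · rw [ih ha h1, zero_mul]
        · have h2 : p.2.degree = 0 := by
            have := degAdd p.1 p.2
            rw [hp] at this; omega
          have hp2 : p.2 = 0 := (Finsupp.degree_eq_zero_iff _).mp h2
          rw [hp2]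
          have hb0 : MvPowerSeries.coeff (0 : Fin n →₀ ℕ) b = 0 := hb
          rw [hb0, mul_zero]
      · intro x y hx hy d hd
        rw [map_add, hx d hd, hy d hd, add_zero]
    exact key d hd

lemma mem_mx_pow_of_coeff {t : ℕ} {h : PS K n}
    (hh : ∀ d : Fin n →₀ ℕ, d.degree < t → MvPowerSeries.coeff d h = 0) :
    h ∈ (mx K n) ^ t := by
  classical
  induction t generalizing h with
  | zero => simp [Ideal.one_eq_top]
  | succ t ih =>
    set hi : Fin n → PS K n := fun i d =>
      if ∀ j, j < i → d j = 0 then MvPowerSeries.coeff (d + Finsupp.single i 1) h else 0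
      with hhi
    have hival : ∀ (i : Fin n) (e : Fin n →₀ ℕ), MvPowerSeries.coeff e (hi i) =
        if ∀ j, j < i → e j = 0 then MvPowerSeries.coeff (e + Finsupp.single i 1) h else 0 :=
      fun i e => rfl
    have hmem : ∀ i, hi i ∈ (mx K n) ^ t := by
      intro i
      apply ih
      intro d hd
      rw [hival]
      split
      · exact hh _ (by rw [degAdd, degSingle]; omega)
      · rfl
    have hX : ∀ i : Fin n, (MvPowerSeries.X i : PS K n) ∈ mx K n := by
      intro i
      show MvPowerSeries.constantCoeff (MvPowerSeries.X i) = 0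
      simp
    have hdecomp : h = ∑ i : Fin n, MvPowerSeries.X i * hi i := by
      ext d
      rw [map_sum]
      by_cases hd0 : d = 0
      · subst hd0
        rw [hh 0 (by simp)]
        refine (Finset.sum_eq_zero ?_).symm
        intro i _
        exact MvPowerSeries.coeff_zero_X_mul _ i
      · have hsupp : d.support.Nonempty := by
          rw [Finset.nonempty_iff_ne_empty]
          intro hc
          exact hd0 (Finsupp.support_eq_empty.mp hc)
        set i0 := d.support.min' hsupp with hi0
        have hi0mem : i0 ∈ d.support := d.support.min'_mem hsupp
        have hd_i0 : d i0 ≠ 0 := Finsupp.mem_support_iff.mp hi0mem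
        rw [Finset.sum_eq_single i0]
        · rw [MvPowerSeries.X, MvPowerSeries.coeff_monomial_mul, if_pos
            ((Finsupp.single_le_iff).mpr (Nat.one_le_iff_ne_zero.mpr hd_i0))]
          rw [one_mul, hival]
          rw [if_pos,
            tsub_add_cancel_of_le ((Finsupp.single_le_iff).mpr (Nat.one_le_iff_ne_zero.mpr hd_i0))]
          intro j hj
          have hns : j ∉ d.support := fun hc => absurd (d.support.min'_le j hc) (not_le.mpr hj)
          have hdj : d j = 0 := Finsupp.notMem_support_iff.mp hns
          simp [Finsupp.tsub_apply, hdj]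
        · intro i _ hne
          rw [MvPowerSeries.X, MvPowerSeries.coeff_monomial_mul]
          split
          · rename_i hle
            rw [one_mul, hival, if_neg]
            intro hall
            have hdi : d i ≠ 0 := by
              have := Finsupp.single_le_iff.mp hle
              omega
            have hmem' : i ∈ d.support := Finsupp.mem_support_iff.mpr hdi
            have hlt : i0 < i := lt_of_le_of_ne (d.support.min'_le i hmem') (Ne.symm hne)
            have := hall i0 hlt
            rw [Finsupp.tsub_apply, Finsupp.single_apply, if_neg hne] at this
            omega
          · rfl
        · intro hc
          exact absurd (Finset.mem_univ i0) hc
    rw [hdecomp]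
    apply Ideal.sum_mem
    intro i _
    rw [pow_succ']
    exact Ideal.mul_mem_mul (hX i) (hmem i)

end Aux


section Aux2
variable {K : Type*} [Field K] {n : ℕ}

lemma pd_mem {t : ℕ} {f : PS K n} (hf : f ∈ (mx K n) ^ (t + 1)) (i : Fin n) :
    pd i f ∈ (mx K n) ^ t := by
  apply mem_mx_pow_of_coeff
  intro d hd
  have hc : MvPowerSeries.coeff d (pd i f) =
      (d i + 1 : ℕ) • MvPowerSeries.coeff (d + Finsupp.single i 1) f := rfl
  rw [hc, coeff_eq_zero_of_mem_mx_pow hf (by rw [degAdd, degSingle]; omega), smul_zero]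

lemma jId_le {t : ℕ} {f : PS K n} (hf : f ∈ (mx K n) ^ (t + 1)) : jId f ≤ (mx K n) ^ t := by
  rw [jId, Ideal.span_le]
  rintro _ ⟨i, rfl⟩
  exact pd_mem hf i

end Aux2

/-- if `⟨f, m^k j(f)⟩ = ⟨g, m^k j(g)⟩` for some `k ≥ 2` with
`m^{⌊(k+2s)/2⌋} ⊆ m⟨f⟩ + m^2 j(f)`, then `f` is contact equivalent to `g`
(assuming the BGM contact determinacy theorem). -/
theorem stmt_7 {K : Type*} [Field K] [IsAlgClosed K] {n : ℕ} (f g : PS K n)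
    (s k : ℕ) (hs : 2 ≤ s) (hk : 2 ≤ k)
    (hf : f ∈ (mx K n) ^ s) (hf' : f ∉ (mx K n) ^ (s + 1))
    (hBGM : ∀ l : ℕ, (mx K n) ^ (l + 2) ≤ mx K n * Ideal.span {f} + (mx K n) ^ 2 * jId f →
      ContactDetermined (2 * l - s + 2) f)
    (hsub : (mx K n) ^ ((k + 2 * s) / 2) ≤ mx K n * Ideal.span {f} + (mx K n) ^ 2 * jId f)
    (heq : TkId k f = TkId k g) :
    ContactEquiv f g := by
  classical
  have hjf : jId f ≤ (mx K n) ^ (s - 1) := by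
    apply jId_le
    rwa [Nat.sub_add_cancel (by omega)]
  have hg : g ∈ TkId k f := by
    rw [heq, TkId]
    exact Ideal.mem_sup_left (Ideal.mem_span_singleton_self g)
  rw [TkId] at hg
  obtain ⟨p, hp, q, hq, hpq⟩ := Submodule.mem_sup.mp hg
  obtain ⟨a, ha⟩ := Ideal.mem_span_singleton'.mp hp
  have hq' : q ∈ (mx K n) ^ (k + s - 1) := by
    have h1 : (mx K n) ^ k * jId f ≤ (mx K n) ^ k * (mx K n) ^ (s - 1) :=
      Ideal.mul_mono_right hjf
    have h2 := h1 hq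
    rw [← pow_add] at h2
    have h3 : k + (s - 1) = k + s - 1 := by omega
    rwa [h3] at h2
  by_cases hu : MvPowerSeries.constantCoeff a = 0
  · exfalso
    have ham : a ∈ mx K n := hu
    have hgm : g ∈ (mx K n) ^ (s + 1) := by
      rw [← hpq]
      apply add_mem
      · rw [← ha]
        have h4 : a * f ∈ mx K n * (mx K n) ^ s := Ideal.mul_mem_mul ham hf
        rwa [← pow_succ'] at h4
      · exact Ideal.pow_le_pow_right (by omega) hq'
    have hjg : jId g ≤ (mx K n) ^ s := jId_le hgm
    have hfmem : f ∈ TkId k g := by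
      rw [← heq, TkId]
      exact Ideal.mem_sup_left (Ideal.mem_span_singleton_self f)
    rw [TkId] at hfmem
    obtain ⟨p', hp', q', hq'', hpq'⟩ := Submodule.mem_sup.mp hfmem
    obtain ⟨b, hb⟩ := Ideal.mem_span_singleton'.mp hp'
    apply hf'
    rw [← hpq']
    apply add_mem
    · rw [← hb]; exact Ideal.mul_mem_left _ b hgm
    · have h1 : (mx K n) ^ k * jId g ≤ (mx K n) ^ k * (mx K n) ^ s :=
        Ideal.mul_mono_right hjg
      have h2 := h1 hq''
      rw [← pow_add] at h2
      exact Ideal.pow_le_pow_right (by omega) h2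
  · have hua : IsUnit a := by
      rw [MvPowerSeries.isUnit_iff_constantCoeff]
      exact isUnit_iff_ne_zero.mpr hu
    obtain ⟨u, rfl⟩ := hua
    set l := (k + 2 * s) / 2 - 2 with hl
    have hdet : ContactDetermined (2 * l - s + 2) f := by
      apply hBGM
      have h5 : l + 2 = (k + 2 * s) / 2 := by omega
      rw [h5]; exact hsub
    have hNle : 2 * l - s + 2 + 1 ≤ k + s - 1 := by omega
    have hmem : (↑u⁻¹ : PS K n) * g - f ∈ (mx K n) ^ (2 * l - s + 2 + 1) := by
      have he : (↑u⁻¹ : PS K n) * g - f = ↑u⁻¹ * q := by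
        rw [← hpq, ← ha, mul_add, ← mul_assoc, Units.inv_mul, one_mul, add_sub_cancel_left]
      rw [he]
      exact Ideal.mul_mem_left _ _ (Ideal.pow_le_pow_right hNle hq')
    obtain ⟨φ, v, hv⟩ := hdet _ hmem
    refine ⟨φ, u * v, ?_⟩
    rw [Units.val_mul]
    calc g = ↑u * (↑u⁻¹ * g) := by rw [← mul_assoc, Units.mul_inv, one_mul]
      _ = ↑u * (↑v * φ f) := by rw [hv]
      _ = ↑u * ↑v * φ f := by rw [mul_assoc]
end
end

section
/- Let f, g ∈ K[[x_1,...,x_n]] with ord(f) = s ≥ 2 and τ(f) < ∞. If T_k(f) ≅ T_k(g) as K-algebras for some k ≥ 2τ(f) − 2s + 4, then f and g are contact equivalent. (Assuming Theorem 'contact': T_k(f) ≅ T_k(g) with m^{⌊(k+2s)/2⌋} ⊆ m⟨f⟩ + m^2 j(f) implies contact equivalence.) -/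
noncomputable section

open MvPowerSeries in
lemma mx_eq_span_X {K : Type*} [Field K] {n : ℕ} :
    mx K n = Ideal.span (Set.range (X : Fin n → PS K n)) := by
  classical
  apply le_antisymm
  · intro f hf
    have hf0 : (coeff 0) f = 0 := hf
    set h : Fin n → PS K n := fun i e =>
      if e i ≠ 0 ∧ ∀ j, j < i → e j = 0 then coeff e f else 0 with hh
    have hmem : ∀ i, h i ∈ Ideal.span (Set.range (X : Fin n → PS K n)) := by
      intro i
      have hdvd : (X i : PS K n) ∣ h i := by
        rw [X_dvd_iff]
        intro m hm
        show h i m = 0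
        simp only [hh]
        rw [if_neg]
        rintro ⟨h1, -⟩
        exact h1 hm
      obtain ⟨g, hg⟩ := hdvd
      rw [hg]
      exact Ideal.mul_mem_right _ _ (Ideal.subset_span ⟨i, rfl⟩)
    have hsum : f = ∑ i, h i := by
      apply MvPowerSeries.ext
      intro e
      rw [map_sum]
      by_cases he : e = 0
      · subst he
        rw [hf0]
        symm
        apply Finset.sum_eq_zero
        intro i _
        show h i 0 = 0
        simp only [hh]
        rw [if_neg]
        rintro ⟨h1, -⟩
        simp at h1
      · have hsupp : e.support.Nonempty := by
          rw [Finsupp.support_nonempty_iff]; exact he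
        set i0 := e.support.min' hsupp with hi0
        have hi0mem : i0 ∈ e.support := e.support.min'_mem hsupp
        have hi0ne : e i0 ≠ 0 := Finsupp.mem_support_iff.mp hi0mem
        rw [Finset.sum_eq_single i0]
        · show (coeff e) f = h i0 e
          simp only [hh]
          rw [if_pos]
          constructor
          · exact hi0ne
          · intro j hj
            by_contra hje
            have : j ∈ e.support := Finsupp.mem_support_iff.mpr hje
            exact absurd (e.support.min'_le j this) (not_le.mpr hj)
        · intro i _ hi
          show h i e = 0
          simp only [hh]
          rw [if_neg]
          rintro ⟨h1, h2⟩
          have : i0 ≠ i := fun hc => hi (hc ▸ rfl)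
          have hlt : i0 < i :=
            lt_of_le_of_ne (e.support.min'_le i (Finsupp.mem_support_iff.mpr h1)) this
          exact hi0ne (h2 i0 hlt)
        · intro hni
          exact absurd (Finset.mem_univ i0) hni
    rw [hsum]
    exact Ideal.sum_mem _ fun i _ => hmem i
  · rw [Ideal.span_le]
    rintro _ ⟨i, rfl⟩
    show _ ∈ RingHom.ker _
    rw [RingHom.mem_ker]
    exact constantCoeff_X i

lemma mx_fg {K : Type*} [Field K] {n : ℕ} : (mx K n).FG := by
  rw [mx_eq_span_X]
  exact Submodule.fg_def.mpr ⟨_, Set.finite_range _, rfl⟩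

lemma mx_le_jacobson {K : Type*} [Field K] {n : ℕ} :
    mx K n ≤ (⊥ : Ideal (PS K n)).jacobson := by
  rw [IsLocalRing.jacobson_eq_maximalIdeal ⊥ bot_ne_top]
  intro x hx
  rw [IsLocalRing.mem_maximalIdeal, mem_nonunits_iff,
    MvPowerSeries.isUnit_iff_constantCoeff]
  have hx0 : MvPowerSeries.constantCoeff x = 0 := hx
  rw [hx0]
  exact not_isUnit_zero

set_option maxHeartbeats 1000000 in
/-- If the quotient by an ideal `I` is finite dimensional of dimension `d`,
then `m^d ⊆ I`. -/
lemma mx_pow_finrank_le {K : Type*} [Field K] {n : ℕ} (I : Ideal (PS K n))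
    [FiniteDimensional K (PS K n ⧸ I)] :
    mx K n ^ (Module.finrank K (PS K n ⧸ I)) ≤ I := by
  classical
  set q := Ideal.Quotient.mk I with hq
  set d := Module.finrank K (PS K n ⧸ I) with hd
  set N : ℕ → Submodule K (PS K n ⧸ I) :=
    fun j => Submodule.restrictScalars K (((mx K n) ^ j).map q) with hN
  have hNmono : ∀ j, N (j + 1) ≤ N j := fun j x hx =>
    (Ideal.map_mono (Ideal.pow_le_pow_right (Nat.le_succ j))) hx
  have key : ∀ j, mx K n ^ j ≤ I ∨ Module.finrank K (N j) + j ≤ d := by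
    intro j
    induction j with
    | zero =>
      right
      have : N 0 = ⊤ := by
        simp only [hN, pow_zero, Ideal.one_eq_top,
          Ideal.map_top]
        rfl
      rw [this]
      simp [finrank_top, hd]
    | succ j ih =>
      rcases ih with hle | hrank
      · left
        exact le_trans (Ideal.pow_le_pow_right (Nat.le_succ j)) hle
      · by_cases heq : N (j + 1) = N j
        · left
          have hmapeq : ((mx K n) ^ (j + 1)).map q = ((mx K n) ^ j).map q :=
            Submodule.restrictScalars_injective K _ _ heq
          have hsupeq : (mx K n) ^ (j + 1) ⊔ I = (mx K n) ^ j ⊔ I := by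
            have := congrArg (Ideal.comap q) hmapeq
            rwa [Ideal.comap_map_of_surjective q Ideal.Quotient.mk_surjective,
              Ideal.comap_map_of_surjective q Ideal.Quotient.mk_surjective,
              ← RingHom.ker_eq_comap_bot, hq, Ideal.mk_ker] at this
          have hnak : (mx K n) ^ j ≤ I ⊔ (mx K n) • ((mx K n) ^ j) := by
            have h1 : (mx K n) ^ j ≤ (mx K n) ^ (j + 1) ⊔ I := by
              rw [hsupeq]; exact le_sup_left
            calc (mx K n) ^ j ≤ (mx K n) ^ (j + 1) ⊔ I := h1
              _ = I ⊔ (mx K n) • ((mx K n) ^ j) := by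
                  rw [sup_comm, smul_eq_mul, ← pow_succ']
          have hj : (mx K n) ^ j ≤ I :=
            Submodule.le_of_le_smul_of_le_jacobson_bot (Submodule.FG.pow (R := PS K n) (M := mx K n) mx_fg j)
              mx_le_jacobson hnak
          exact le_trans (Ideal.pow_le_pow_right (Nat.le_succ j)) hj
        · right
          have hlt : N (j + 1) < N j := lt_of_le_of_ne (hNmono j) heq
          have := Submodule.finrank_lt_finrank_of_lt hlt
          omega
  rcases key d with hle | hrank
  · exact hle
  · have h0 : Module.finrank K (N d) = 0 := by omega
    have hbot : N d = ⊥ := Submodule.finrank_eq_zero.mp h0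
    have hmapbot : ((mx K n) ^ d).map q = ⊥ :=
      (Submodule.restrictScalars_eq_bot_iff K _ _).mp hbot
    intro x hx
    have := Ideal.mem_map_of_mem q hx
    rw [hmapbot, Ideal.mem_bot] at this
    exact (Ideal.Quotient.eq_zero_iff_mem).mp this

/-- if `T_k(f) ≅ T_k(g)` for some `k ≥ 2τ(f) − 2s + 4` then
`f` and `g` are contact equivalent (assuming Theorem `contact`). -/
theorem stmt_9 {K : Type*} [Field K] [IsAlgClosed K] {n : ℕ} (f g : PS K n)
    (s k : ℕ) (hs : 2 ≤ s)
    (hf : f ∈ (mx K n) ^ s) (hf' : f ∉ (mx K n) ^ (s + 1))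
    (htau : FiniteDimensional K (PS K n ⧸ tjId f))
    (hk : 2 * Module.finrank K (PS K n ⧸ tjId f) + 4 ≤ k + 2 * s)
    (hThm : ∀ k' : ℕ,
      Nonempty ((PS K n ⧸ TkId k' f) ≃ₐ[K] (PS K n ⧸ TkId k' g)) →
      (mx K n) ^ ((k' + 2 * s) / 2) ≤ mx K n * Ideal.span {f} + (mx K n) ^ 2 * jId f →
      ContactEquiv f g)
    (hiso : Nonempty ((PS K n ⧸ TkId k f) ≃ₐ[K] (PS K n ⧸ TkId k g))) :
    ContactEquiv f g := by
  apply hThm k hiso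
  set τ := Module.finrank K (PS K n ⧸ tjId f) with htn
  have h1 : mx K n ^ τ ≤ tjId f := mx_pow_finrank_le (tjId f)
  have h2 : τ + 2 ≤ (k + 2 * s) / 2 := by omega
  rw [Submodule.add_eq_sup]
  calc mx K n ^ ((k + 2 * s) / 2) ≤ mx K n ^ (τ + 2) := Ideal.pow_le_pow_right h2
    _ = mx K n ^ τ * mx K n ^ 2 := by rw [← pow_add]
    _ ≤ tjId f * mx K n ^ 2 := Ideal.mul_mono_left h1
    _ = Ideal.span {f} * mx K n ^ 2 ⊔ jId f * mx K n ^ 2 := by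
        rw [tjId, Ideal.sup_mul]
    _ ≤ mx K n * Ideal.span {f} ⊔ mx K n ^ 2 * jId f := by
        apply sup_le
        · refine le_trans ?_ le_sup_left
          rw [mul_comm]
          exact Ideal.mul_mono_left (Ideal.pow_le_self two_ne_zero)
        · rw [mul_comm]
          exact le_sup_right
end
end
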